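/- (Entropic risk as an OCE) Let β < 0 and define u_β(t) = (e^{βt} − 1)/β for t ∈ ℝ; then u_β is a utility function, and for every probability mass function P on a finite nonempty set S and every g : S → ℝ: OCE^{u_β}_P(g) = (1/β)·log( Σ_{s∈S} P(s)·e^{β·g(s)} ), where log denotes the natural logarithm. -/

import Mathlib

/-- A utility function: nondecreasing, concave, `u 0 = 0`, and `u t ≤ t`. -/
def IsUtility (u : ℝ → ℝ) : Prop :=
  Monotone u ∧ ConcaveOn ℝ Set.univ u ∧ u 0 = 0 ∧ ∀ t : ℝ, u t ≤ t

/-- A probability mass function on a finite type. -/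
def IsPMF {S : Type*} [Fintype S] (P : S → ℝ) : Prop :=
  (∀ s, 0 ≤ P s) ∧ ∑ s, P s = 1

/-- The optimized certainty equivalent of `g : S → ℝ` under the pmf `P`. -/
noncomputable def OCE {S : Type*} [Fintype S] (u : ℝ → ℝ) (P : S → ℝ) (g : S → ℝ) : ℝ :=
  ⨆ lam : ℝ, (lam + ∑ s, P s * u (g s - lam))

lemma entropic_utility (β : ℝ) (hβ : β < 0) :
    IsUtility (fun t => (Real.exp (β * t) - 1) / β) := by
  refine ⟨?_, ?_, by simp, ?_⟩
  · intro a b hab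
    simp only
    rw [div_le_div_right_of_neg hβ]
    have : β * b ≤ β * a := by nlinarith
    nlinarith [Real.exp_le_exp.mpr this]
  · have h1 : ConvexOn ℝ Set.univ (fun t : ℝ => Real.exp (β * t)) := by
      have := convexOn_exp.comp_affineMap (β • (AffineMap.id ℝ ℝ))
      have e : (Real.exp ∘ ⇑(β • AffineMap.id ℝ ℝ)) = fun t => Real.exp (β * t) := by
        funext t; simp
      rw [e, Set.preimage_univ] at this
      exact this
    have hpos : (0:ℝ) ≤ -1 / β := by
      apply le_of_lt
      rw [div_pos_iff]
      right; constructor <;> linarith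
    have h3 : ConcaveOn ℝ Set.univ ((-1/β) • (-(fun t : ℝ => Real.exp (β * t)))) :=
      ConcaveOn.smul hpos h1.neg
    have h4 := h3.add (concaveOn_const (-1/β) convex_univ)
    convert h4 using 1
    case e'_10 => rfl
    funext t
    simp only [Pi.add_apply, Pi.smul_apply, Pi.neg_apply, smul_eq_mul]
    field_simp
    ring
  · intro t
    rw [div_le_iff_of_neg hβ]
    nlinarith [Real.add_one_le_exp (β * t)]

theorem entropic_oce {S : Type*} [Fintype S] [Nonempty S] (β : ℝ) (hβ : β < 0) :
    IsUtility (fun t => (Real.exp (β * t) - 1) / β) ∧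
    ∀ P : S → ℝ, IsPMF P → ∀ g : S → ℝ,
      OCE (fun t => (Real.exp (β * t) - 1) / β) P g =
        (1 / β) * Real.log (∑ s, P s * Real.exp (β * g s)) := by
  refine ⟨entropic_utility β hβ, ?_⟩
  intro P hP g
  have hβ' : β ≠ 0 := ne_of_lt hβ
  set Z : ℝ := ∑ s, P s * Real.exp (β * g s) with hZdef
  have hZpos : 0 < Z := by
    obtain ⟨s, -, hs⟩ : ∃ s ∈ Finset.univ, (0:ℝ) < P s := by
      by_contra h
      push_neg at h
      have : ∑ s, P s ≤ 0 := Finset.sum_nonpos (fun s hs => h s hs)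
      rw [hP.2] at this; linarith
    exact Finset.sum_pos' (fun s _ => mul_nonneg (hP.1 s) (Real.exp_pos _).le)
      ⟨s, Finset.mem_univ s, mul_pos hs (Real.exp_pos _)⟩
  set c : ℝ := (1/β) * Real.log Z with hcdef
  -- rewrite the objective
  have hform : ∀ lam : ℝ, (lam + ∑ s, P s * ((Real.exp (β * (g s - lam)) - 1) / β))
      = lam + Z * Real.exp (-(β * lam)) / β - 1/β := by
    intro lam
    have hterm : ∀ s, P s * ((Real.exp (β * (g s - lam)) - 1) / β)
        = (P s * Real.exp (β * g s)) * Real.exp (-(β * lam)) / β - P s / β := by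
      intro s
      have h1 : β * (g s - lam) = β * g s + (-(β * lam)) := by ring
      rw [h1, Real.exp_add]
      field_simp
    rw [Finset.sum_congr rfl (fun s _ => hterm s), Finset.sum_sub_distrib,
      ← Finset.sum_div, ← Finset.sum_div, ← Finset.sum_mul, hP.2, ← hZdef]
    ring
  -- upper bound
  have hub : ∀ lam : ℝ, (lam + ∑ s, P s * ((Real.exp (β * (g s - lam)) - 1) / β)) ≤ c := by
    intro lam
    rw [hform lam]
    have h1 : Real.log Z - β * lam + 1 ≤ Z * Real.exp (-(β * lam)) := by
      have h := Real.add_one_le_exp (Real.log Z - β * lam)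
      rw [show Real.log Z - β * lam = Real.log Z + (-(β * lam)) by ring,
        Real.exp_add, Real.exp_log hZpos] at h
      linarith
    have h2 : Z * Real.exp (-(β * lam)) / β ≤ (Real.log Z - β * lam + 1) / β :=
      (div_le_div_right_of_neg hβ).mpr h1
    have h3 : (Real.log Z - β * lam + 1) / β = (1/β) * Real.log Z - lam + 1/β := by
      field_simp
    rw [hcdef]
    linarith
  -- value at the maximizer
  have hval : ((c : ℝ) + ∑ s, P s * ((Real.exp (β * (g s - c)) - 1) / β)) = c := by
    rw [hform c]
    have h1 : β * c = Real.log Z := by rw [hcdef]; field_simp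
    rw [h1, Real.exp_neg, Real.exp_log hZpos]
    field_simp
    ring
  have hbdd : BddAbove (Set.range fun lam : ℝ =>
      lam + ∑ s, P s * ((Real.exp (β * (g s - lam)) - 1) / β)) := by
    refine ⟨c, ?_⟩
    rintro x ⟨lam, rfl⟩
    exact hub lam
  unfold OCE
  apply le_antisymm
  · exact ciSup_le hub
  · have := le_ciSup hbdd c
    rw [hval] at this
    exact this
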